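/- Suppose S is a biorder decomposed as a disjoint union S = S₁ ⊔ S₂ such that s ≫ t for all s ∈ S₁ and t ∈ S₂ (so S₁ and S₂ are biorders with the restricted structure). For a configuration a for S write a₁ = a|_{S₁} and a₂ = a|_{S₂}. Then for each h ∈ {i, j}: if φ_h(a₁) ≥ ε_h(a₂), then ẽ_h a = 0 if and only if ẽ_h a₁ = 0, and when ẽ_h a ≠ 0 one has (ẽ_h a)|_{S₁} = ẽ_h a₁ and (ẽ_h a)|_{S₂} = a₂; if φ_h(a₁) < ε_h(a₂), then ẽ_h a ≠ 0 with (ẽ_h a)|_{S₁} = a₁ and (ẽ_h a)|_{S₂} = ẽ_h a₂. Similarly, if φ_h(a₁) > ε_h(a₂), then f̃_h a ≠ 0 with (f̃_h a)|_{S₁} = f̃_h a₁ and (f̃_h a)|_{S₂} = a₂; if φ_h(a₁) ≤ ε_h(a₂), then f̃_h a = 0 if and only if f̃_h a₂ = 0, and when f̃_h a ≠ 0 one has (f̃_h a)|_{S₁} = a₁ and (f̃_h a)|_{S₂} = f̃_h a₂. Moreover, if a is a good configuration for S, then a₁ and a₂ are good configurations for S₁ and S₂ respectively. -/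

import Mathlib

/-!  Biorders and configurations (Section 4 of the paper).

A biorder is a finite set `S` with two linear orders `>_i`, `>_j` and a labelling
`Γ : S → {i, j}` (here modelled by `Bool`, with `true` standing for the label `i` and
`false` for the label `j`), such that `s >_i t` and `t >_j s` force `Γ s = j` and `Γ t = i`.

A configuration is a function `a : S → ℕ` taking values in `{0, 1, 2}`.

All signature-related notions are defined relative to a finite subset `T ⊆ S`
(the biorder restricted to `T`); the notions for the biorder `S` itself are recovered
by taking `T = Finset.univ`. -/

attribute [local instance] Classical.propDecidable

namespace BiorderCrystal

structure Biorder (S : Type) where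
  /-- the linear order whose strict relation is `<_i` -/
  li : LinearOrder S
  /-- the linear order whose strict relation is `<_j` -/
  lj : LinearOrder S
  /-- the labelling `Γ : S → {i, j}`; `true` means label `i`, `false` means label `j` -/
  lab : S → Bool
  /-- if `s >_i t` and `t >_j s` then `Γ s = j` and `Γ t = i` -/
  compat : ∀ s t : S, li.lt t s → lj.lt s t → lab s = false ∧ lab t = true

variable {S : Type}

/-- `s <_i t`. -/
def Biorder.lti (B : Biorder S) (s t : S) : Prop := B.li.lt s t

/-- `s <_j t`. -/
def Biorder.ltj (B : Biorder S) (s t : S) : Prop := B.lj.lt s t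

/-- The order used for the `h`-signature: `>_i` if `h = true`, `>_j` if `h = false`. -/
def Biorder.ord (B : Biorder S) (h : Bool) : LinearOrder S := if h then B.li else B.lj

/-- `s ≫ t`, i.e. `s >_i t` and `s >_j t`. -/
def Biorder.gg (B : Biorder S) (s t : S) : Prop := B.lti t s ∧ B.ltj t s

/-- `s ⋗ t`, i.e. `s >_i t` or `s >_j t`. -/
def Biorder.gd (B : Biorder S) (s t : S) : Prop := B.lti t s ∨ B.ltj t s

/-- `▷`, the transitive closure of `⋗`, computed within the subset `T`. -/
def Biorder.triOn (B : Biorder S) (T : Finset S) : S → S → Prop :=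
  Relation.TransGen (fun s t => s ∈ T ∧ t ∈ T ∧ B.gd s t)

/-- The sign `π_h(a, s) ∈ {+1, 0, -1}` contributed by `s` to the `h`-signature of `a`. -/
def sgn (B : Biorder S) (h : Bool) (a : S → ℕ) (s : S) : ℤ :=
  if (a s = 0 ∧ B.lab s = h) ∨ (a s = 1 ∧ B.lab s ≠ h) then 1
  else if (a s = 1 ∧ B.lab s = h) ∨ (a s = 2 ∧ B.lab s ≠ h) then -1
  else 0

variable [Fintype S]

/-- Minus the partial sum of the `h`-signature of `a` (over `T`) along the positions
up to and including that of `s`: the elements of `T` which are `≥ s` in the order `ord h`. -/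
noncomputable def G (B : Biorder S) (h : Bool) (T : Finset S) (a : S → ℕ) (s : S) : ℤ :=
  -(∑ t ∈ T.filter (fun t => (B.ord h).le s t), sgn B h a t)

/-- The sum of the `h`-signature of `a` (over `T`) from the position of `s` onwards:
the elements of `T` which are `≤ s` in the order `ord h`. -/
noncomputable def H (B : Biorder S) (h : Bool) (T : Finset S) (a : S → ℕ) (s : S) : ℤ :=
  ∑ t ∈ T.filter (fun t => (B.ord h).le t s), sgn B h a t

/-- `ε_h(a)` (over `T`): the maximum of `0` and all the partial sums `G`. -/
noncomputable def epsB (B : Biorder S) (h : Bool) (T : Finset S) (a : S → ℕ) : ℤ :=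
  T.fold max 0 (G B h T a)

/-- `φ_h(a)` (over `T`): the maximum of `0` and all the partial sums `H`. -/
noncomputable def phiB (B : Biorder S) (h : Bool) (T : Finset S) (a : S → ℕ) : ℤ :=
  T.fold max 0 (H B h T a)

/-- The `h`-good element of `T` for `a`:  the element in the good position of the
`h`-signature, i.e. the `ord h`-greatest element achieving `G = ε_h > 0` (or `none`). -/
noncomputable def goodElt (B : Biorder S) (h : Bool) (T : Finset S) (a : S → ℕ) : Option S :=
  if hne : (T.filter fun s => 0 < epsB B h T a ∧ G B h T a s = epsB B h T a).Nonempty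
  then some (@Finset.max' S (B.ord h) _ hne)
  else none

/-- The `h`-cogood element of `T` for `a`: the element in the cogood position of the
`h`-signature, i.e. the `ord h`-least element achieving `H = φ_h > 0` (or `none`). -/
noncomputable def cogoodElt (B : Biorder S) (h : Bool) (T : Finset S) (a : S → ℕ) : Option S :=
  if hne : (T.filter fun s => 0 < phiB B h T a ∧ H B h T a s = phiB B h T a).Nonempty
  then some (@Finset.min' S (B.ord h) _ hne)
  else none

/-- The crystal operator `ẽ_h` (over `T`): decrease `a` by one at the `h`-good element,
or `none` (the ghost element `0`) if there is no good position. -/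
noncomputable def et (B : Biorder S) (h : Bool) (T : Finset S) (a : S → ℕ) :
    Option (S → ℕ) :=
  (goodElt B h T a).map fun s => Function.update a s (a s - 1)

/-- The crystal operator `f̃_h` (over `T`): increase `a` by one at the `h`-cogood element,
or `none` (the ghost element `0`) if there is no cogood position. -/
noncomputable def ft (B : Biorder S) (h : Bool) (T : Finset S) (a : S → ℕ) :
    Option (S → ℕ) :=
  (cogoodElt B h T a).map fun s => Function.update a s (a s + 1)

/-- `a` is a good configuration for the biorder restricted to `T`:
axioms G1, G2, G3 of the paper. -/
def IsGoodOn (B : Biorder S) (T : Finset S) (a : S → ℕ) : Prop :=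
  (¬ ∃ s ∈ T, ∃ t ∈ T, B.lti t s ∧ B.ltj s t ∧ a s = 1 ∧ a t = 1) ∧
  (¬ ∃ s ∈ T, ∃ t ∈ T, B.gd s t ∧ B.triOn T t s ∧ B.lab s = B.lab t ∧ a s < a t) ∧
  (¬ ∃ q ∈ T, ∃ r ∈ T, ∃ s ∈ T, ∃ t ∈ T,
      B.gd q r ∧ B.gg r s ∧ B.gd s t ∧ B.gg r t ∧ B.gd t q ∧ B.gg q s ∧
      a q = 2 ∧ a s = 2 ∧ a r = 0 ∧ a t = 0)

section FoldAux
variable {α : Type}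

lemma fold_max_le' (s : Finset α) (f : α → ℤ) {b c : ℤ}
    (hb : b ≤ c) (hf : ∀ x ∈ s, f x ≤ c) : s.fold max b f ≤ c :=
  (Finset.fold_max_le c).2 ⟨hb, hf⟩

lemma le_fold_max_base (s : Finset α) (f : α → ℤ) (b : ℤ) : b ≤ s.fold max b f :=
  (Finset.le_fold_max b).2 (Or.inl le_rfl)

lemma le_fold_max_elt (s : Finset α) (f : α → ℤ) (b : ℤ) {x : α} (hx : x ∈ s) :
    f x ≤ s.fold max b f :=
  (Finset.le_fold_max (f x)).2 (Or.inr ⟨x, hx, le_rfl⟩)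

lemma fold_max_achieves (s : Finset α) (f : α → ℤ) (b : ℤ) :
    s.fold max b f = b ∨ ∃ x ∈ s, s.fold max b f = f x := by
  induction s using Finset.induction with
  | empty => left; simp
  | insert x s hx ih =>
    rw [Finset.fold_insert hx]
    rcases le_total (f x) (s.fold max b f) with hle | hle
    · rw [max_eq_right hle]
      rcases ih with h1 | ⟨y, hy, h2⟩
      · exact Or.inl h1
      · exact Or.inr ⟨y, Finset.mem_insert_of_mem hy, h2⟩
    · rw [max_eq_left hle]
      exact Or.inr ⟨x, Finset.mem_insert_self x s, rfl⟩

lemma fold_max_shift (s : Finset α) (g : α → ℤ) (c : ℤ) :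
    max (-c) (s.fold max 0 (fun x => g x - c)) = max 0 (s.fold max 0 g - c) := by
  have h0F : (0:ℤ) ≤ s.fold max 0 (fun x => g x - c) := le_fold_max_base _ _ _
  have h0g : (0:ℤ) ≤ s.fold max 0 g := le_fold_max_base _ _ _
  apply le_antisymm
  · apply max_le
    · exact le_max_of_le_right (by linarith)
    · apply fold_max_le'
      · exact le_max_left _ _
      · intro x hx
        have := le_fold_max_elt s g 0 hx
        exact le_max_of_le_right (by linarith)
  · apply max_le
    · exact le_max_of_le_right h0F
    · have : s.fold max 0 g ≤ max (-c) (s.fold max 0 fun x => g x - c) + c := by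
        apply fold_max_le'
        · linarith [le_max_left (-c) (s.fold max 0 fun x => g x - c)]
        · intro x hx
          have h1 := le_fold_max_elt s (fun x => g x - c) 0 hx
          have h2 : g x - c ≤ max (-c) (s.fold max 0 fun x => g x - c) :=
            le_trans h1 (le_max_right _ _)
          linarith
      linarith

end FoldAux

section OrderAux
variable {S : Type}

/-- Existence of a top element (isolating `Finset.max'` to avoid instance-cache pollution). -/
lemma exists_top (O : LinearOrder S) (U : Finset S) (hU : U.Nonempty) :
    ∃ m ∈ U, ∀ t ∈ U, O.le t m :=
  ⟨@Finset.max' S O U hU, @Finset.max'_mem S O U hU,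
    fun t ht => @Finset.le_max' S O U t ht⟩

lemma max'_eq_of_subset (O : LinearOrder S) {A B : Finset S} (hAB : A ⊆ B)
    (hA : A.Nonempty) (hB : B.Nonempty)
    (hsep : ∀ x ∈ B, x ∉ A → ∀ y ∈ A, O.lt x y) :
    @Finset.max' S O B hB = @Finset.max' S O A hA := by
  set mB := @Finset.max' S O B hB with hmB
  have hmBB : mB ∈ B := @Finset.max'_mem S O B hB
  by_cases hmBA : mB ∈ A
  · refine O.le_antisymm _ _ ?_ ?_
    · obtain ⟨y, hy⟩ := hA
      exact @Finset.max'_le S O B hB _ (fun t ht => by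
        by_cases htA : t ∈ A
        · exact @Finset.le_max' S O A t htA
        · exact @le_of_lt S O.toPreorder _ _ (@lt_of_lt_of_le S O.toPreorder _ _ _
            (hsep t ht htA _ hmBA) (@Finset.le_max' S O A mB hmBA)))
    · exact @Finset.le_max' S O B _ (hAB (@Finset.max'_mem S O A hA))
  · obtain ⟨y, hy⟩ := hA
    have h1 : O.lt mB y := hsep mB hmBB hmBA y hy
    have h2 : O.le y mB := @Finset.le_max' S O B y (hAB hy)
    exact absurd (@lt_of_lt_of_le S O.toPreorder _ _ _ h1 h2) (@lt_irrefl S O.toPreorder _)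

lemma min'_eq_of_subset (O : LinearOrder S) {A B : Finset S} (hAB : A ⊆ B)
    (hA : A.Nonempty) (hB : B.Nonempty)
    (hsep : ∀ x ∈ B, x ∉ A → ∀ y ∈ A, O.lt y x) :
    @Finset.min' S O B hB = @Finset.min' S O A hA := by
  set mB := @Finset.min' S O B hB with hmB
  have hmBB : mB ∈ B := @Finset.min'_mem S O B hB
  by_cases hmBA : mB ∈ A
  · refine O.le_antisymm _ _ ?_ ?_
    · exact @Finset.le_min' S O A hA _ (fun t ht => @Finset.min'_le S O B t (hAB ht))
    · exact @Finset.min'_le S O A _ hmBA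
  · obtain ⟨y, hy⟩ := hA
    have h1 : O.lt y mB := hsep mB hmBB hmBA y hy
    have h2 : O.le mB y := @Finset.min'_le S O B y (hAB hy)
    exact absurd (@lt_of_lt_of_le S O.toPreorder _ _ _ h1 h2) (@lt_irrefl S O.toPreorder _)

section PhiEps
variable {S : Type}

lemma phi_eps_general (O : LinearOrder S) (f : S → ℤ) (U : Finset S) :
    U.fold max 0 (fun s => ∑ t ∈ U.filter (fun t => O.le t s), f t)
      = U.fold max 0 (fun s => -(∑ t ∈ U.filter (fun t => O.le s t), f t)) + ∑ t ∈ U, f t := by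
  induction U using Finset.strongInduction with
  | _ U ih =>
    rcases U.eq_empty_or_nonempty with rfl | hU
    · simp
    · obtain ⟨m, hmU, hle_m⟩ := exists_top O U hU
      set U' := U.erase m with hU'
      have hmU' : m ∉ U' := Finset.notMem_erase m U
      have hins : insert m U' = U := Finset.insert_erase hmU
      have hmem' : ∀ {t}, t ∈ U' → t ∈ U ∧ t ≠ m := by
        intro t ht; exact ⟨Finset.mem_of_mem_erase ht, Finset.ne_of_mem_erase ht⟩
      have fold_split : ∀ g : S → ℤ, U.fold max 0 g = max (g m) (U'.fold max 0 g) := by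
        intro g
        conv_lhs => rw [← hins]
        rw [Finset.fold_insert hmU']
      have sum_split : ∑ t ∈ U, f t = f m + ∑ t ∈ U', f t := by
        conv_lhs => rw [← hins]
        rw [Finset.sum_insert hmU']
      have hHm : (U.filter (fun t => O.le t m)) = U :=
        Finset.filter_true_of_mem (fun t ht => hle_m t ht)
      have hHs : ∀ s ∈ U', U.filter (fun t => O.le t s) = U'.filter (fun t => O.le t s) := by
        intro s hs
        ext t
        simp only [Finset.mem_filter, hU', Finset.mem_erase]
        constructor
        · rintro ⟨ht, hts⟩
          refine ⟨⟨?_, ht⟩, hts⟩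
          rintro rfl
          exact (hmem' hs).2 (O.le_antisymm _ _ (hle_m s (hmem' hs).1) hts)
        · rintro ⟨⟨_, ht⟩, hts⟩; exact ⟨ht, hts⟩
      have hGm : (U.filter (fun t => O.le m t)) = {m} := by
        ext t
        simp only [Finset.mem_filter, Finset.mem_singleton]
        constructor
        · rintro ⟨ht, hmt⟩; exact O.le_antisymm _ _ (hle_m t ht) hmt
        · intro htm; rw [htm]; exact ⟨hmU, O.le_refl m⟩
      have hGs : ∀ s ∈ U', U.filter (fun t => O.le s t)
          = insert m (U'.filter (fun t => O.le s t)) := by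
        intro s hs
        ext t
        simp only [Finset.mem_filter, Finset.mem_insert, hU', Finset.mem_erase]
        constructor
        · rintro ⟨ht, hst⟩
          by_cases htm : t = m
          · exact Or.inl htm
          · exact Or.inr ⟨⟨htm, ht⟩, hst⟩
        · rintro (htm | ⟨⟨_, ht⟩, hst⟩)
          · rw [htm]; exact ⟨hmU, hle_m s (hmem' hs).1⟩
          · exact ⟨ht, hst⟩
      have ihU' := ih U' (Finset.erase_ssubset hmU)
      rw [fold_split, fold_split]
      have eH : U'.fold max 0 (fun s => ∑ t ∈ U.filter (fun t => O.le t s), f t)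
          = U'.fold max 0 (fun s => ∑ t ∈ U'.filter (fun t => O.le t s), f t) :=
        Finset.fold_congr (fun s hs => by rw [hHs s hs])
      have eG : U'.fold max 0 (fun s => -(∑ t ∈ U.filter (fun t => O.le s t), f t))
          = U'.fold max 0 (fun s =>
              (fun x => -(∑ t ∈ U'.filter (fun t => O.le x t), f t)) s - f m) :=
        Finset.fold_congr (fun s hs => by
          rw [hGs s hs, Finset.sum_insert (by simp [hU'])]; ring)
      rw [eH, ihU', hHm, hGm, eG, Finset.sum_singleton, sum_split]
      rw [fold_max_shift U' (fun x => -(∑ t ∈ U'.filter (fun t => O.le x t), f t)) (f m)]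
      set eps' := U'.fold max 0 (fun s => -(∑ t ∈ U'.filter (fun t => O.le s t), f t)) with heps'
      set Ssum := ∑ t ∈ U', f t with hSsum
      rcases le_total (f m) eps' with hce | hce
      · rw [max_eq_right (by linarith : f m + Ssum ≤ eps' + Ssum),
          max_eq_right (by linarith : (0:ℤ) ≤ eps' - f m)]
        ring
      · rw [max_eq_left (by linarith : eps' + Ssum ≤ f m + Ssum),
          max_eq_left (by linarith : eps' - f m ≤ (0:ℤ))]
        ring

end PhiEps
end OrderAux
section Congr
variable {S : Type} [Fintype S]

lemma goodElt_congr (B : Biorder S) (h : Bool) (U V : Finset S) (a : S → ℕ)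
    (hsub : (V.filter fun s => 0 < epsB B h V a ∧ G B h V a s = epsB B h V a)
      ⊆ (U.filter fun s => 0 < epsB B h U a ∧ G B h U a s = epsB B h U a))
    (himp : (U.filter fun s => 0 < epsB B h U a ∧ G B h U a s = epsB B h U a).Nonempty
      → (V.filter fun s => 0 < epsB B h V a ∧ G B h V a s = epsB B h V a).Nonempty)
    (hsep : ∀ x ∈ (U.filter fun s => 0 < epsB B h U a ∧ G B h U a s = epsB B h U a),
      x ∉ (V.filter fun s => 0 < epsB B h V a ∧ G B h V a s = epsB B h V a) →
      ∀ y ∈ (V.filter fun s => 0 < epsB B h V a ∧ G B h V a s = epsB B h V a),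
        (B.ord h).lt x y) :
    goodElt B h U a = goodElt B h V a := by
  unfold goodElt
  by_cases hV : (V.filter fun s => 0 < epsB B h V a ∧ G B h V a s = epsB B h V a).Nonempty
  · rw [dif_pos hV, dif_pos (hV.mono hsub)]
    exact congrArg some (max'_eq_of_subset (B.ord h) hsub hV (hV.mono hsub) hsep)
  · rw [dif_neg hV, dif_neg (fun hU => hV (himp hU))]

lemma cogoodElt_congr (B : Biorder S) (h : Bool) (U V : Finset S) (a : S → ℕ)
    (hsub : (V.filter fun s => 0 < phiB B h V a ∧ H B h V a s = phiB B h V a)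
      ⊆ (U.filter fun s => 0 < phiB B h U a ∧ H B h U a s = phiB B h U a))
    (himp : (U.filter fun s => 0 < phiB B h U a ∧ H B h U a s = phiB B h U a).Nonempty
      → (V.filter fun s => 0 < phiB B h V a ∧ H B h V a s = phiB B h V a).Nonempty)
    (hsep : ∀ x ∈ (U.filter fun s => 0 < phiB B h U a ∧ H B h U a s = phiB B h U a),
      x ∉ (V.filter fun s => 0 < phiB B h V a ∧ H B h V a s = phiB B h V a) →
      ∀ y ∈ (V.filter fun s => 0 < phiB B h V a ∧ H B h V a s = phiB B h V a),
        (B.ord h).lt y x) :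
    cogoodElt B h U a = cogoodElt B h V a := by
  unfold cogoodElt
  by_cases hV : (V.filter fun s => 0 < phiB B h V a ∧ H B h V a s = phiB B h V a).Nonempty
  · rw [dif_pos hV, dif_pos (hV.mono hsub)]
    exact congrArg some (min'_eq_of_subset (B.ord h) hsub hV (hV.mono hsub) hsep)
  · rw [dif_neg hV, dif_neg (fun hU => hV (himp hU))]

lemma et_ne_none (B : Biorder S) (h : Bool) (V : Finset S) (a : S → ℕ)
    (hne : (V.filter fun s => 0 < epsB B h V a ∧ G B h V a s = epsB B h V a).Nonempty) :
    et B h V a ≠ none := by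
  unfold et goodElt
  rw [dif_pos hne]
  simp

lemma ft_ne_none (B : Biorder S) (h : Bool) (V : Finset S) (a : S → ℕ)
    (hne : (V.filter fun s => 0 < phiB B h V a ∧ H B h V a s = phiB B h V a).Nonempty) :
    ft B h V a ≠ none := by
  unfold ft cogoodElt
  rw [dif_pos hne]
  simp

end Congr

/-- Proposition 4.13 of the paper: if `S = S₁ ⊔ S₂` with `s ≫ t` for all `s ∈ S₁`,
`t ∈ S₂`, then `C(S) ≅ C(S₁) ⊗ C(S₂)` as crystals (expressed here via the tensor-product
rule for the crystal operators, where the operators relative to `T` and to `Tᶜ` play the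
roles of the operators on the restrictions `a₁`, `a₂`), and restrictions of good
configurations are good. -/
theorem biorder_tensor_decomposition (S : Type) [Fintype S] (B : Biorder S)
    (T : Finset S) (hdec : ∀ s ∈ T, ∀ t ∉ T, B.gg s t)
    (a : S → ℕ) (ha : ∀ s, a s ≤ 2) (h : Bool) :
    (epsB B h Tᶜ a ≤ phiB B h T a →
      et B h Finset.univ a = et B h T a) ∧
    (phiB B h T a < epsB B h Tᶜ a →
      et B h Finset.univ a = et B h Tᶜ a ∧ et B h Tᶜ a ≠ none) ∧
    (epsB B h Tᶜ a < phiB B h T a →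
      ft B h Finset.univ a = ft B h T a ∧ ft B h T a ≠ none) ∧
    (phiB B h T a ≤ epsB B h Tᶜ a →
      ft B h Finset.univ a = ft B h Tᶜ a) ∧
    (IsGoodOn B Finset.univ a → IsGoodOn B T a ∧ IsGoodOn B Tᶜ a) := by
  have hlt : ∀ {s t : S}, s ∈ T → t ∉ T → (B.ord h).lt t s := by
    intro s t hs ht
    have hg := hdec s hs t ht
    cases h
    · exact hg.2
    · exact hg.1
  have hnotle : ∀ {x y : S}, (B.ord h).lt x y → ¬ (B.ord h).le y x := by
    intro x y hxy hyx
    exact absurd (@lt_of_lt_of_le S (B.ord h).toPreorder _ _ _ hxy hyx)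
      (@lt_irrefl S (B.ord h).toPreorder _)
  have hle_of_lt : ∀ {x y : S}, (B.ord h).lt x y → (B.ord h).le x y :=
    fun hxy => @le_of_lt S (B.ord h).toPreorder _ _ hxy
  have hsumG : ∀ s : S, ∑ t ∈ Finset.univ.filter (fun t => (B.ord h).le s t), sgn B h a t
      = ∑ t ∈ T.filter (fun t => (B.ord h).le s t), sgn B h a t
        + ∑ t ∈ Tᶜ.filter (fun t => (B.ord h).le s t), sgn B h a t := by
    intro s
    rw [← Finset.union_compl T, Finset.filter_union,
      Finset.sum_union (Finset.disjoint_filter_filter disjoint_compl_right)]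
  have hsumH : ∀ s : S, ∑ t ∈ Finset.univ.filter (fun t => (B.ord h).le t s), sgn B h a t
      = ∑ t ∈ T.filter (fun t => (B.ord h).le t s), sgn B h a t
        + ∑ t ∈ Tᶜ.filter (fun t => (B.ord h).le t s), sgn B h a t := by
    intro s
    rw [← Finset.union_compl T, Finset.filter_union,
      Finset.sum_union (Finset.disjoint_filter_filter disjoint_compl_right)]
  have hGT : ∀ s ∈ T, G B h Finset.univ a s = G B h T a s := by
    intro s hs
    unfold G
    rw [hsumG s]
    have hempty : Tᶜ.filter (fun t => (B.ord h).le s t) = ∅ := by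
      apply Finset.filter_false_of_mem
      intro t ht
      exact hnotle (hlt hs (Finset.mem_compl.1 ht))
    rw [hempty, Finset.sum_empty]
    ring
  have hGC : ∀ s ∉ T, G B h Finset.univ a s
      = G B h Tᶜ a s - ∑ t ∈ T, sgn B h a t := by
    intro s hs
    unfold G
    rw [hsumG s]
    have hfull : T.filter (fun t => (B.ord h).le s t) = T := by
      apply Finset.filter_true_of_mem
      intro t ht
      exact hle_of_lt (hlt ht hs)
    rw [hfull]
    ring
  have hHC : ∀ s ∉ T, H B h Finset.univ a s = H B h Tᶜ a s := by
    intro s hs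
    unfold H
    rw [hsumH s]
    have hempty : T.filter (fun t => (B.ord h).le t s) = ∅ := by
      apply Finset.filter_false_of_mem
      intro t ht
      exact hnotle (hlt ht hs)
    rw [hempty, Finset.sum_empty]
    ring
  have hHT : ∀ s ∈ T, H B h Finset.univ a s
      = H B h T a s + ∑ t ∈ Tᶜ, sgn B h a t := by
    intro s hs
    unfold H
    rw [hsumH s]
    have hfull : Tᶜ.filter (fun t => (B.ord h).le t s) = Tᶜ := by
      apply Finset.filter_true_of_mem
      intro t ht
      exact hle_of_lt (hlt hs (Finset.mem_compl.1 ht))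
    rw [hfull]
  have pe1 : phiB B h T a = epsB B h T a + ∑ t ∈ T, sgn B h a t :=
    phi_eps_general (B.ord h) (sgn B h a) T
  have pe2 : phiB B h Tᶜ a = epsB B h Tᶜ a + ∑ t ∈ Tᶜ, sgn B h a t :=
    phi_eps_general (B.ord h) (sgn B h a) Tᶜ
  have eps_nonneg : ∀ U : Finset S, (0:ℤ) ≤ epsB B h U a :=
    fun U => le_fold_max_base U (G B h U a) 0
  have phi_nonneg : ∀ U : Finset S, (0:ℤ) ≤ phiB B h U a :=
    fun U => le_fold_max_base U (H B h U a) 0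
  have eps_le : ∀ (U : Finset S), ∀ s ∈ U, G B h U a s ≤ epsB B h U a :=
    fun U s hs => le_fold_max_elt U (G B h U a) 0 hs
  have phi_le : ∀ (U : Finset S), ∀ s ∈ U, H B h U a s ≤ phiB B h U a :=
    fun U s hs => le_fold_max_elt U (H B h U a) 0 hs
  have eps_ach : ∀ U : Finset S, 0 < epsB B h U a →
      ∃ s ∈ U, G B h U a s = epsB B h U a := by
    intro U hU
    rcases fold_max_achieves U (G B h U a) 0 with h0 | ⟨x, hx, hfx⟩
    · have h0' : epsB B h U a = 0 := h0
      rw [h0'] at hU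
      exact absurd hU (lt_irrefl 0)
    · have hfx' : epsB B h U a = G B h U a x := hfx
      exact ⟨x, hx, hfx'.symm⟩
  have phi_ach : ∀ U : Finset S, 0 < phiB B h U a →
      ∃ s ∈ U, H B h U a s = phiB B h U a := by
    intro U hU
    rcases fold_max_achieves U (H B h U a) 0 with h0 | ⟨x, hx, hfx⟩
    · have h0' : phiB B h U a = 0 := h0
      rw [h0'] at hU
      exact absurd hU (lt_irrefl 0)
    · have hfx' : phiB B h U a = H B h U a x := hfx
      exact ⟨x, hx, hfx'.symm⟩
  refine ⟨?_, ?_, ?_, ?_, ?_⟩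
  -- Case 1 : epsB Tᶜ ≤ phiB T, et over univ = et over T
  · intro hle
    have he : epsB B h Finset.univ a = epsB B h T a := by
      apply le_antisymm
      · refine fold_max_le' _ _ (eps_nonneg T) ?_
        intro s _
        by_cases hs : s ∈ T
        · rw [hGT s hs]; exact eps_le T s hs
        · rw [hGC s hs]
          have h1 := eps_le Tᶜ s (Finset.mem_compl.2 hs)
          linarith [pe1]
      · refine fold_max_le' _ _ (eps_nonneg Finset.univ) ?_
        intro s hs
        rw [← hGT s hs]
        exact eps_le Finset.univ s (Finset.mem_univ s)
    have hgood : goodElt B h Finset.univ a = goodElt B h T a := by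
      apply goodElt_congr
      · intro x hx
        rw [Finset.mem_filter] at hx ⊢
        exact ⟨Finset.mem_univ x, by rw [he]; exact hx.2.1,
          by rw [hGT x hx.1, he]; exact hx.2.2⟩
      · rintro ⟨x, hx⟩
        rw [Finset.mem_filter] at hx
        have hpos : 0 < epsB B h T a := by rw [← he]; exact hx.2.1
        obtain ⟨y, hy, hGy⟩ := eps_ach T hpos
        exact ⟨y, Finset.mem_filter.2 ⟨hy, hpos, hGy⟩⟩
      · intro x hx hxn y hy
        rw [Finset.mem_filter] at hx hy
        have hxT : x ∉ T := by
          intro hxT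
          exact hxn (Finset.mem_filter.2 ⟨hxT, by rw [← he]; exact hx.2.1,
            (hGT x hxT).symm.trans (hx.2.2.trans he)⟩)
        exact hlt hy.1 hxT
    unfold et
    rw [hgood]
  -- Case 2 : phiB T < epsB Tᶜ
  · intro hlt2
    have h2pos : 0 < epsB B h Tᶜ a := lt_of_le_of_lt (phi_nonneg T) hlt2
    obtain ⟨x0, hx0, hGx0⟩ := eps_ach Tᶜ h2pos
    have he : epsB B h Finset.univ a = epsB B h Tᶜ a - ∑ t ∈ T, sgn B h a t := by
      apply le_antisymm
      · refine fold_max_le' _ _ (by linarith [pe1, eps_nonneg T]) ?_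
        intro s _
        by_cases hs : s ∈ T
        · rw [hGT s hs]
          have h1 := eps_le T s hs
          linarith [pe1]
        · rw [hGC s hs]
          have h1 := eps_le Tᶜ s (Finset.mem_compl.2 hs)
          linarith
      · have hx : G B h Finset.univ a x0 = epsB B h Tᶜ a - ∑ t ∈ T, sgn B h a t := by
          rw [hGC x0 (Finset.mem_compl.1 hx0), hGx0]
        exact hx ▸ eps_le Finset.univ x0 (Finset.mem_univ x0)
    have hset : (Finset.univ.filter fun s =>
          0 < epsB B h Finset.univ a ∧ G B h Finset.univ a s = epsB B h Finset.univ a)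
        = (Tᶜ.filter fun s => 0 < epsB B h Tᶜ a ∧ G B h Tᶜ a s = epsB B h Tᶜ a) := by
      ext x
      simp only [Finset.mem_filter, Finset.mem_univ, true_and]
      constructor
      · rintro ⟨hpos, hGx⟩
        have hxT : x ∉ T := by
          intro hxT
          rw [hGT x hxT] at hGx
          have h1 := eps_le T x hxT
          rw [he] at hGx
          linarith [pe1]
        rw [hGC x hxT, he] at hGx
        exact ⟨Finset.mem_compl.2 hxT, h2pos, by linarith⟩
      · rintro ⟨hxC, hpos, hGx⟩
        refine ⟨by rw [he]; linarith [pe1, eps_nonneg T], ?_⟩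
        rw [hGC x (Finset.mem_compl.1 hxC), hGx, he]
    constructor
    · have hgood : goodElt B h Finset.univ a = goodElt B h Tᶜ a := by
        apply goodElt_congr
        · rw [hset]
        · rw [hset]; exact id
        · intro x hx hxn y _
          rw [hset] at hx
          exact absurd hx hxn
      unfold et
      rw [hgood]
    · exact et_ne_none B h Tᶜ a ⟨x0, Finset.mem_filter.2 ⟨hx0, h2pos, hGx0⟩⟩
  -- Case 3 : epsB Tᶜ < phiB T
  · intro hlt3
    have h1pos : 0 < phiB B h T a := lt_of_le_of_lt (eps_nonneg Tᶜ) hlt3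
    obtain ⟨x0, hx0, hHx0⟩ := phi_ach T h1pos
    have he : phiB B h Finset.univ a = phiB B h T a + ∑ t ∈ Tᶜ, sgn B h a t := by
      apply le_antisymm
      · refine fold_max_le' _ _ (by linarith [pe2, phi_nonneg Tᶜ]) ?_
        intro s _
        by_cases hs : s ∈ T
        · rw [hHT s hs]
          have h1 := phi_le T s hs
          linarith
        · rw [hHC s hs]
          have h1 := phi_le Tᶜ s (Finset.mem_compl.2 hs)
          linarith [pe2]
      · have hx : H B h Finset.univ a x0 = phiB B h T a + ∑ t ∈ Tᶜ, sgn B h a t := by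
          rw [hHT x0 hx0, hHx0]
        exact hx ▸ phi_le Finset.univ x0 (Finset.mem_univ x0)
    have hset : (Finset.univ.filter fun s =>
          0 < phiB B h Finset.univ a ∧ H B h Finset.univ a s = phiB B h Finset.univ a)
        = (T.filter fun s => 0 < phiB B h T a ∧ H B h T a s = phiB B h T a) := by
      ext x
      simp only [Finset.mem_filter, Finset.mem_univ, true_and]
      constructor
      · rintro ⟨hpos, hHx⟩
        have hxT : x ∈ T := by
          by_contra hxT
          rw [hHC x hxT] at hHx
          have h1 := phi_le Tᶜ x (Finset.mem_compl.2 hxT)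
          rw [he] at hHx
          linarith [pe2]
        rw [hHT x hxT, he] at hHx
        exact ⟨hxT, h1pos, by linarith⟩
      · rintro ⟨hxT, hpos, hHx⟩
        refine ⟨by rw [he]; linarith [pe2, phi_nonneg Tᶜ], ?_⟩
        rw [hHT x hxT, hHx, he]
    constructor
    · have hgood : cogoodElt B h Finset.univ a = cogoodElt B h T a := by
        apply cogoodElt_congr
        · rw [hset]
        · rw [hset]; exact id
        · intro x hx hxn y _
          rw [hset] at hx
          exact absurd hx hxn
      unfold ft
      rw [hgood]
    · exact ft_ne_none B h T a ⟨x0, Finset.mem_filter.2 ⟨hx0, h1pos, hHx0⟩⟩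
  -- Case 4 : phiB T ≤ epsB Tᶜ
  · intro hle4
    have he : phiB B h Finset.univ a = phiB B h Tᶜ a := by
      apply le_antisymm
      · refine fold_max_le' _ _ (phi_nonneg Tᶜ) ?_
        intro s _
        by_cases hs : s ∈ T
        · rw [hHT s hs]
          have h1 := phi_le T s hs
          linarith [pe2]
        · rw [hHC s hs]
          exact phi_le Tᶜ s (Finset.mem_compl.2 hs)
      · refine fold_max_le' _ _ (phi_nonneg Finset.univ) ?_
        intro s hs
        rw [← hHC s (Finset.mem_compl.1 hs)]
        exact phi_le Finset.univ s (Finset.mem_univ s)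
    have hgood : cogoodElt B h Finset.univ a = cogoodElt B h Tᶜ a := by
      apply cogoodElt_congr
      · intro x hx
        rw [Finset.mem_filter] at hx ⊢
        exact ⟨Finset.mem_univ x, by rw [he]; exact hx.2.1,
          by rw [hHC x (Finset.mem_compl.1 hx.1), he]; exact hx.2.2⟩
      · rintro ⟨x, hx⟩
        rw [Finset.mem_filter] at hx
        have hpos : 0 < phiB B h Tᶜ a := by rw [← he]; exact hx.2.1
        obtain ⟨y, hy, hHy⟩ := phi_ach Tᶜ hpos
        exact ⟨y, Finset.mem_filter.2 ⟨hy, hpos, hHy⟩⟩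
      · intro x hx hxn y hy
        rw [Finset.mem_filter] at hx hy
        have hxT : x ∈ T := by
          by_contra hxT
          exact hxn (Finset.mem_filter.2 ⟨Finset.mem_compl.2 hxT,
            by rw [← he]; exact hx.2.1,
            (hHC x hxT).symm.trans (hx.2.2.trans he)⟩)
        exact hlt hxT (Finset.mem_compl.1 hy.1)
    unfold ft
    rw [hgood]
  -- Goodness restriction
  · intro hg
    have mono : ∀ U : Finset S, IsGoodOn B U a := by
      intro U
      obtain ⟨g1, g2, g3⟩ := hg
      refine ⟨?_, ?_, ?_⟩
      · rintro ⟨s, hs, t, ht, h1, h2, h3, h4⟩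
        exact g1 ⟨s, Finset.mem_univ s, t, Finset.mem_univ t, h1, h2, h3, h4⟩
      · rintro ⟨s, hs, t, ht, h1, h2, h3, h4⟩
        refine g2 ⟨s, Finset.mem_univ s, t, Finset.mem_univ t, h1, ?_, h3, h4⟩
        exact Relation.TransGen.mono (r := fun s t => s ∈ U ∧ t ∈ U ∧ B.gd s t)
          (p := fun s t => s ∈ Finset.univ ∧ t ∈ Finset.univ ∧ B.gd s t)
          (fun p q hpq => ⟨Finset.mem_univ p, Finset.mem_univ q, hpq.2.2⟩) t s h2
      · rintro ⟨q, hq, r, hr, s, hs, t, ht, rest⟩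
        exact g3 ⟨q, Finset.mem_univ q, r, Finset.mem_univ r, s, Finset.mem_univ s,
          t, Finset.mem_univ t, rest⟩
    exact ⟨mono T, mono Tᶜ⟩

end BiorderCrystal
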